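/- Let $Z:[0,1]^d\to\mathbb{R}$ have partial derivatives up to order $|\mathbf s|$ with all derivatives of order $|\mathbf s|$ Hölder continuous of exponent $\gamma\in(0,1]$ with constant $M$ in sup-norm, and all derivatives of order $\le|\mathbf s|$ bounded by $M$. Suppose weights $w_{\mathbf j}(x)$ satisfy: $\sum_{\mathbf j}(x_{\mathbf j}-x)^{\mathbf r}w_{\mathbf j}(x)=\delta_{\mathbf r,\mathbf s}\,\mathbf s!$ for $|\mathbf r|\le|\mathbf s|$; $w_{\mathbf j}(x)=0$ if $\|x-x_{\mathbf j}\|_\infty>h$; and $\sum_{\mathbf j}|w_{\mathbf j}(x)|\le C_3 h^{-|\mathbf s|}$. Then $\sup_{x\in[0,1]^d}\big|\sum_{\mathbf j}w_{\mathbf j}(x)Z(x_{\mathbf j})-\partial^{\mathbf s}Z(x)\big|\le M\,h^{\gamma}\,C_3\sum_{|\mathbf k|=|\mathbf s|}\frac{1}{\mathbf k!}$. -/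

import Mathlib

open Set Finset


def mset (d n i : ℕ) : Finset (Fin d → ℕ) :=
  (Fintype.piFinset fun _ : Fin d => Finset.range (n+1)).filter
    (fun β => (∑ j, β j) < n ∧ ∀ j : Fin d, i ≤ (j : ℕ) → β j = 0)

def rset (d n i : ℕ) : Finset (Fin d → ℕ) :=
  (Fintype.piFinset fun _ : Fin d => Finset.range (n+1)).filter
    (fun β => (∑ j, β j) = n ∧ ∀ j : Fin d, i ≤ (j : ℕ) → β j = 0)

def ptm {d : ℕ} (x y : Fin d → ℝ) (i : ℕ) : Fin d → ℝ :=
  fun j => if (j : ℕ) < i then x j else y j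

lemma mem_mset {d n i : ℕ} {β : Fin d → ℕ} :
    β ∈ mset d n i ↔ (∑ j, β j) < n ∧ ∀ j : Fin d, i ≤ (j : ℕ) → β j = 0 := by
  unfold mset
  rw [Finset.mem_filter]
  constructor
  · exact fun h => h.2
  · intro h
    refine ⟨?_, h⟩
    rw [Fintype.mem_piFinset]
    intro j
    rw [Finset.mem_range]
    exact Nat.lt_succ_of_lt (lt_of_le_of_lt
      (Finset.single_le_sum (fun _ _ => Nat.zero_le _) (Finset.mem_univ j)) h.1)

lemma mem_rset {d n i : ℕ} {β : Fin d → ℕ} :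
    β ∈ rset d n i ↔ (∑ j, β j) = n ∧ ∀ j : Fin d, i ≤ (j : ℕ) → β j = 0 := by
  unfold rset
  rw [Finset.mem_filter]
  constructor
  · exact fun h => h.2
  · intro h
    refine ⟨?_, h⟩
    rw [Fintype.mem_piFinset]
    intro j
    rw [Finset.mem_range]
    exact Nat.lt_succ_of_le (h.1 ▸
      Finset.single_le_sum (fun _ _ => Nat.zero_le _) (Finset.mem_univ j))

lemma rset_subset (d n i : ℕ) : rset d n i ⊆ rset d n (i+1) := by
  intro β hβ
  rw [mem_rset] at hβ ⊢
  exact ⟨hβ.1, fun j hj => hβ.2 j (le_trans (Nat.le_succ i) hj)⟩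

lemma ptm_zero {d : ℕ} (x y : Fin d → ℝ) : ptm x y 0 = y := by
  funext j; simp [ptm]

lemma ptm_ge {d : ℕ} (x y : Fin d → ℝ) {i : ℕ} (h : d ≤ i) : ptm x y i = x := by
  funext j; simp [ptm, lt_of_lt_of_le j.isLt h]

lemma ptm_mem {d : ℕ} {x y : Fin d → ℝ} (hx : x ∈ Icc (0 : Fin d → ℝ) 1)
    (hy : y ∈ Icc (0 : Fin d → ℝ) 1) (i : ℕ) : ptm x y i ∈ Icc (0 : Fin d → ℝ) 1 := by
  constructor <;> intro j <;> simp only [ptm] <;> split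
  · exact hx.1 j
  · exact hy.1 j
  · exact hx.2 j
  · exact hy.2 j

lemma ptm_update {d : ℕ} (x y : Fin d → ℝ) (i : ℕ) (hid : i < d) :
    Function.update (ptm x y (i+1)) ⟨i, hid⟩ (y ⟨i, hid⟩) = ptm x y i := by
  funext j
  by_cases hj : j = (⟨i, hid⟩ : Fin d)
  · subst hj
    rw [Function.update_self]
    simp [ptm]
  · rw [Function.update_of_ne hj]
    have hji : (j : ℕ) ≠ i := fun h => hj (Fin.ext h)
    simp only [ptm]
    split_ifs <;> first | rfl | omega

lemma prod_update_eval {d : ℕ} (φ : Fin d → ℕ → ℝ) (β : Fin d → ℕ) (I : Fin d)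
    (h : φ I (β I) = 1) (k : ℕ) :
    ∏ j, φ j (Function.update β I k j) = φ I k * ∏ j, φ j (β j) := by
  rw [← Finset.mul_prod_erase Finset.univ (fun j => φ j (Function.update β I k j))
    (Finset.mem_univ I), Function.update_self]
  congr 1
  rw [← Finset.prod_erase (f := fun j => φ j (β j)) (a := I) Finset.univ h]
  apply Finset.prod_congr rfl
  intro j hj
  rw [Function.update_of_ne (Finset.mem_erase.mp hj).1]

lemma sum_update_erase {d : ℕ} (β : Fin d → ℕ) (I : Fin d) (k : ℕ) :
    (∑ j, Function.update β I k j) + β I = k + ∑ j, β j := by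
  rw [Finset.sum_update_of_mem (Finset.mem_univ I), ← Finset.erase_eq,
    ← Finset.add_sum_erase Finset.univ β (Finset.mem_univ I)]
  ring

lemma sum_update_zero {d : ℕ} (β : Fin d → ℕ) (I : Fin d) (h : β I = 0) (k : ℕ) :
    (∑ j, Function.update β I k j) = k + ∑ j, β j := by
  have := sum_update_erase β I k
  omega

lemma sum_bij_main {d : ℕ} (n i : ℕ) (hid : i < d) (g : (Fin d → ℕ) → ℝ) :
    (∑ β ∈ mset d n i, ∑ k ∈ Finset.range (n - ∑ j, β j), g (Function.update β ⟨i, hid⟩ k))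
      = ∑ β ∈ mset d n (i+1), g β := by
  set I : Fin d := ⟨i, hid⟩ with hI
  rw [Finset.sum_sigma' (mset d n i) (fun β => Finset.range (n - ∑ j, β j))
    (fun β k => g (Function.update β I k))]
  apply Finset.sum_nbij' (i := fun σ => Function.update σ.1 I σ.2)
    (j := fun β => ⟨Function.update β I 0, β I⟩)
  · rintro ⟨β, k⟩ hσ
    rw [Finset.mem_sigma] at hσ
    obtain ⟨hβ, hk⟩ := hσ
    dsimp only at *
    rw [mem_mset] at hβ
    rw [Finset.mem_range] at hk
    have hβI : β I = 0 := hβ.2 I (le_refl i)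
    rw [mem_mset]
    constructor
    · rw [sum_update_zero β I hβI k]; omega
    · intro j hj
      have hjI : j ≠ I := by
        intro hh
        rw [hh, hI] at hj
        have hvi : ((⟨i, hid⟩ : Fin d) : ℕ) = i := rfl
        rw [hvi] at hj
        omega
      rw [Function.update_of_ne hjI]
      exact hβ.2 j (by omega)
  · intro β hβ
    rw [mem_mset] at hβ
    rw [Finset.mem_sigma]
    dsimp only
    constructor
    · rw [mem_mset]
      constructor
      · have := sum_update_erase β I 0
        omega
      · intro j hj
        by_cases hjI : j = I
        · rw [hjI, Function.update_self]
        · rw [Function.update_of_ne hjI]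
          apply hβ.2 j
          have : (j : ℕ) ≠ i := fun h => hjI (Fin.ext h)
          omega
    · rw [Finset.mem_range]
      have := sum_update_erase β I 0
      omega
  · rintro ⟨β, k⟩ hσ
    rw [Finset.mem_sigma] at hσ
    have hβI : β I = 0 := (mem_mset.mp hσ.1).2 I (le_refl i)
    rw [Function.update_idem, Function.update_self]
    have h2 : Function.update β I 0 = β := by rw [← hβI]; exact Function.update_eq_self I β
    rw [h2]
  · intro β hβ
    rw [Function.update_idem]
    exact Function.update_eq_self I β
  · rintro ⟨β, k⟩ _
    rfl

lemma sum_bij_rem {d : ℕ} (n i : ℕ) (hid : i < d) (g : (Fin d → ℕ) → ℝ) :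
    (∑ β ∈ mset d n i, g (Function.update β ⟨i, hid⟩ (n - ∑ j, β j)))
      = ∑ β ∈ rset d n (i+1) \ rset d n i, g β := by
  set I : Fin d := ⟨i, hid⟩ with hI
  apply Finset.sum_nbij' (i := fun β => Function.update β I (n - ∑ j, β j))
    (j := fun β => Function.update β I 0)
  · intro β hβ
    rw [mem_mset] at hβ
    have hβI : β I = 0 := hβ.2 I (le_refl i)
    rw [Finset.mem_sdiff]
    constructor
    · rw [mem_rset]
      constructor
      · rw [sum_update_zero β I hβI]; omega
      · intro j hj
        have hjI : j ≠ I := by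
          intro hh
          rw [hh, hI] at hj
          have hvi : ((⟨i, hid⟩ : Fin d) : ℕ) = i := rfl
          rw [hvi] at hj
          omega
        rw [Function.update_of_ne hjI]
        exact hβ.2 j (by omega)
    · rw [mem_rset]
      intro hcon
      have := hcon.2 I (le_refl i)
      rw [Function.update_self] at this
      omega
  · intro β hβ
    rw [Finset.mem_sdiff, mem_rset, mem_rset] at hβ
    obtain ⟨⟨hsum, hsupp⟩, hnot⟩ := hβ
    have hβI : β I ≠ 0 := by
      intro h0
      apply hnot
      refine ⟨hsum, fun j hj => ?_⟩
      by_cases hjI : j = I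
      · rw [hjI]; exact h0
      · have : (j : ℕ) ≠ i := fun h => hjI (Fin.ext h)
        exact hsupp j (by omega)
    rw [mem_mset]
    have hse := sum_update_erase β I 0
    constructor
    · omega
    · intro j hj
      by_cases hjI : j = I
      · rw [hjI, Function.update_self]
      · rw [Function.update_of_ne hjI]
        have : (j : ℕ) ≠ i := fun h => hjI (Fin.ext h)
        exact hsupp j (by omega)
  · intro β hβ
    rw [mem_mset] at hβ
    have hβI : β I = 0 := hβ.2 I (le_refl i)
    rw [Function.update_idem]
    rw [← hβI]
    exact Function.update_eq_self I β
  · intro β hβ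
    rw [Finset.mem_sdiff, mem_rset, mem_rset] at hβ
    obtain ⟨⟨hsum, hsupp⟩, hnot⟩ := hβ
    have hβI : β I ≠ 0 := by
      intro h0
      apply hnot
      refine ⟨hsum, fun j hj => ?_⟩
      by_cases hjI : j = I
      · rw [hjI]; exact h0
      · have : (j : ℕ) ≠ i := fun h => hjI (Fin.ext h)
        exact hsupp j (by omega)
    have hse := sum_update_erase β I 0
    rw [Function.update_idem]
    have : n - (∑ j, Function.update β I 0 j) = β I := by omega
    rw [this]
    exact Function.update_eq_self I β
  · intro β _
    rfl

lemma mset_top (d n : ℕ) :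
    mset d n d = (Finset.range n).biUnion (fun m => Finset.Nat.antidiagonalTuple d m) := by
  ext β
  rw [mem_mset, Finset.mem_biUnion]
  constructor
  · intro h
    exact ⟨∑ j, β j, Finset.mem_range.mpr h.1, Finset.Nat.mem_antidiagonalTuple.mpr rfl⟩
  · rintro ⟨m, hm, hβ⟩
    rw [Finset.Nat.mem_antidiagonalTuple] at hβ
    exact ⟨hβ ▸ Finset.mem_range.mp hm, fun j hj => absurd j.isLt (by omega)⟩

lemma rset_top (d n : ℕ) : rset d n d = Finset.Nat.antidiagonalTuple d n := by
  ext β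
  rw [mem_rset, Finset.Nat.mem_antidiagonalTuple]
  constructor
  · exact fun h => h.1
  · exact fun h => ⟨h, fun j hj => absurd j.isLt (by omega)⟩

lemma update_mem_Icc {d : ℕ} {p : Fin d → ℝ} (hp : p ∈ Icc (0 : Fin d → ℝ) 1) (I : Fin d)
    {t : ℝ} (ht : t ∈ Icc (0 : ℝ) 1) : Function.update p I t ∈ Icc (0 : Fin d → ℝ) 1 := by
  constructor <;> intro j <;> by_cases hjI : j = I
  · subst hjI; rw [Function.update_self]; exact ht.1
  · rw [Function.update_of_ne hjI]; exact hp.1 j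
  · subst hjI; rw [Function.update_self]; exact ht.2
  · rw [Function.update_of_ne hjI]; exact hp.2 j

lemma taylor1D (f : ℕ → ℝ → ℝ) (a b : ℝ) (m : ℕ)
    (hf : ∀ k < m, ∀ t ∈ Set.uIcc a b, HasDerivWithinAt (f k) (f (k+1) t) (Set.uIcc a b) t) :
    ∃ ξ ∈ Set.uIcc a b,
      f 0 b = (∑ k ∈ Finset.range m, f k a * (b - a)^k / (Nat.factorial k))
        + f m ξ * (b - a)^m / (Nat.factorial m) := by
  rcases Nat.eq_zero_or_pos m with rfl | hm
  · exact ⟨b, Set.right_mem_uIcc, by simp⟩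
  obtain ⟨mm, rfl⟩ : ∃ mm, m = mm + 1 := ⟨m - 1, (Nat.succ_pred_eq_of_pos hm).symm⟩
  rcases eq_or_ne a b with rfl | hab
  · refine ⟨a, Set.left_mem_uIcc, ?_⟩
    rw [Finset.sum_eq_single 0]
    · simp
    · intro k _ hk; simp [sub_self, zero_pow hk]
    · simp
  -- Rolle setup
  set lo := min a b with hlo
  set hi := max a b with hhi
  have hlh : lo < hi := min_lt_max.mpr hab
  have huIcc : Set.uIcc a b = Set.Icc lo hi := rfl
  set G : ℝ → ℝ := fun t => ∑ k ∈ Finset.range (mm+1), f k t * (b - t)^k / (Nat.factorial k) with hG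
  set C : ℝ := f 0 b - G a with hC
  set ψ : ℝ → ℝ := fun t => G t + C * ((b - t)^(mm+1) / (b - a)^(mm+1)) with hψ
  have hba : (b - a) ≠ 0 := sub_ne_zero.mpr (Ne.symm hab)
  -- continuity of ψ on Icc lo hi
  have hcont : ContinuousOn ψ (Set.Icc lo hi) := by
    apply ContinuousOn.add
    · apply continuousOn_finset_sum
      intro k hk
      have hfk : ContinuousOn (f k) (Set.Icc lo hi) := by
        intro t ht
        exact (hf k (Finset.mem_range.mp hk) t (huIcc ▸ ht)).continuousWithinAt
      exact ((hfk.mul ((continuous_const.sub continuous_id).pow k).continuousOn).div_const _)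
    · exact continuousOn_const.mul
        (((continuous_const.sub continuous_id).pow (mm+1)).continuousOn.div_const _)
  -- derivative of ψ at interior points
  have hderivψ : ∀ t ∈ Set.Ioo lo hi,
      HasDerivAt ψ (f (mm+1) t * (b - t)^mm / (Nat.factorial mm)
        + C * ((↑(mm+1) * (b - t)^mm * (-1)) / (b - a)^(mm+1))) t := by
    intro t ht
    have hmem : Set.uIcc a b ∈ nhds t := by
      rw [huIcc]; exact Icc_mem_nhds ht.1 ht.2
    have hG' : HasDerivAt G (∑ k ∈ Finset.range (mm+1),
        ((f (k+1) t * (b - t)^k + f k t * (↑k * (b - t)^(k-1) * (-1))) / (Nat.factorial k))) t := by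
      apply HasDerivAt.fun_sum
      intro k hk
      have h1 : HasDerivAt (f k) (f (k+1) t) t :=
        (hf k (Finset.mem_range.mp hk) t (mem_of_mem_nhds hmem)).hasDerivAt hmem
      have h2 : HasDerivAt (fun t => (b - t)^k) (↑k * (b - t)^(k-1) * (-1)) t := by
        simpa using ((hasDerivAt_id t).const_sub b).fun_pow k
      exact (h1.mul h2).div_const _
    have hsum : (∑ k ∈ Finset.range (mm+1),
        ((f (k+1) t * (b - t)^k + f k t * (↑k * (b - t)^(k-1) * (-1))) / (Nat.factorial k)))
        = f (mm+1) t * (b - t)^mm / (Nat.factorial mm) := by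
      have : ∀ k, ((f (k+1) t * (b - t)^k + f k t * (↑k * (b - t)^(k-1) * (-1))) / (Nat.factorial k))
          = f (k+1) t * (b - t)^k / (Nat.factorial k)
            - f k t * (↑k * (b - t)^(k-1)) / (Nat.factorial k) := by
        intro k; ring
      simp only [this]
      rw [Finset.sum_sub_distrib, Finset.sum_range_succ, Finset.sum_range_succ']
      have h0 : f 0 t * (↑(0:ℕ) * (b - t)^(0-1)) / (Nat.factorial 0) = 0 := by simp
      rw [h0, add_zero]
      have hsh : ∀ k, f (k+1) t * (↑(k+1) * (b - t)^(k+1-1)) / (Nat.factorial (k+1))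
          = f (k+1) t * (b - t)^k / (Nat.factorial k) := by
        intro k
        have : (Nat.factorial (k+1) : ℝ) = (k+1) * Nat.factorial k := by
          rw [Nat.factorial_succ]; push_cast; ring
        rw [this]
        have hk0 : (k:ℝ) + 1 ≠ 0 := by positivity
        have hfk0 : (Nat.factorial k : ℝ) ≠ 0 := Nat.cast_ne_zero.mpr (Nat.factorial_ne_zero k)
        rw [Nat.add_sub_cancel]; push_cast
        rw [div_eq_div_iff (by positivity) hfk0]
        ring
      simp only [hsh]
      ring
    have hP : HasDerivAt (fun t => C * ((b - t)^(mm+1) / (b - a)^(mm+1)))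
        (C * ((↑(mm+1) * (b - t)^mm * (-1)) / (b - a)^(mm+1))) t := by
      have h2 : HasDerivAt (fun t => (b - t)^(mm+1)) (↑(mm+1) * (b - t)^(mm+1-1) * (-1)) t := by
        simpa using ((hasDerivAt_id t).const_sub b).fun_pow (mm+1)
      simpa using ((h2.div_const ((b-a)^(mm+1))).const_mul C)
    have hfinal := hG'.add hP
    rw [hsum] at hfinal
    exact hfinal
  -- ψ lo = ψ hi
  have hψa : ψ a = f 0 b := by
    simp only [hψ]
    rw [div_self (pow_ne_zero _ hba)]
    simp [hC]
  have hψb : ψ b = f 0 b := by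
    simp only [hψ, hG]
    rw [Finset.sum_eq_single 0]
    · simp
    · intro k _ hk; simp [sub_self, zero_pow hk]
    · simp
  have hψeq : ψ lo = ψ hi := by
    rcases min_le_max (a := a) (b := b) with _
    rcases le_total a b with hab' | hab'
    · rw [hlo, hhi, min_eq_left hab', max_eq_right hab', hψa, hψb]
    · rw [hlo, hhi, min_eq_right hab', max_eq_left hab', hψb, hψa]
  obtain ⟨ξ, hξmem, hξ0⟩ := exists_hasDerivAt_eq_zero hlh hcont hψeq (fun t ht => hderivψ t ht)
  refine ⟨ξ, by rw [huIcc]; exact Set.Ioo_subset_Icc_self hξmem, ?_⟩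
  -- solve for C
  have hbξ : (b - ξ) ≠ 0 := by
    rcases le_total a b with hab' | hab'
    · have : b = hi := by rw [hhi, max_eq_right hab']
      exact sub_ne_zero.mpr (by rw [this]; exact hξmem.2.ne')
    · have : b = lo := by rw [hlo, min_eq_right hab']
      exact sub_ne_zero.mpr (by rw [this]; exact hξmem.1.ne)
  have hfact : (Nat.factorial mm : ℝ) ≠ 0 := Nat.cast_ne_zero.mpr (Nat.factorial_ne_zero mm)
  have hCval : C = f (mm+1) ξ * (b - a)^(mm+1) / (Nat.factorial (mm+1)) := by
    have h1 : f (mm+1) ξ * (b - ξ)^mm / (Nat.factorial mm)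
        = C * (↑(mm+1) * (b - ξ)^mm) / (b - a)^(mm+1) := by
      linear_combination hξ0
    have h2 : (Nat.factorial (mm+1) : ℝ) = (mm+1) * Nat.factorial mm := by
      rw [Nat.factorial_succ]; push_cast; ring
    have hmm1 : ((mm:ℝ)+1) ≠ 0 := by positivity
    have key : C * (b - ξ)^mm
        = (f (mm+1) ξ * (b - a)^(mm+1) / (Nat.factorial (mm+1))) * (b - ξ)^mm := by
      rw [h2]
      push_cast at h1
      have e : f (mm+1) ξ * (b - a)^(mm+1) / (((mm:ℝ)+1) * (Nat.factorial mm)) * (b - ξ)^mm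
          = (f (mm+1) ξ * (b - ξ)^mm / (Nat.factorial mm)) * (b - a)^(mm+1) / ((mm:ℝ)+1) := by
        rw [mul_comm ((mm:ℝ)+1), ← div_div]; ring
      rw [e, h1]
      field_simp
    exact mul_right_cancel₀ (pow_ne_zero mm hbξ) key
  have hGa : f 0 b = G a + C := by rw [hC]; ring
  rw [hGa, hCval, hG]

lemma key_taylor {d : ℕ} (n : ℕ) (γ M : ℝ) (hγ : 0 < γ) (hM : 0 < M)
    (D : (Fin d → ℕ) → (Fin d → ℝ) → ℝ)
    (hderiv : ∀ β : Fin d → ℕ, (∑ i, β i) < n → ∀ i : Fin d,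
      ∀ x ∈ Icc (0 : Fin d → ℝ) 1,
        HasDerivWithinAt (fun t : ℝ => D β (Function.update x i t))
          (D (Function.update β i (β i + 1)) x) (Icc (0:ℝ) 1) (x i))
    (hhold : ∀ β : Fin d → ℕ, (∑ i, β i) = n →
      ∀ p ∈ Icc (0 : Fin d → ℝ) 1, ∀ q ∈ Icc (0 : Fin d → ℝ) 1,
        |D β p - D β q| ≤ M * dist p q ^ γ)
    (x y : Fin d → ℝ) (hx : x ∈ Icc (0 : Fin d → ℝ) 1) (hy : y ∈ Icc (0 : Fin d → ℝ) 1) :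
    |D 0 y - (∑ β ∈ mset d n d, D β x * (∏ j, (y j - x j) ^ β j) / (∏ j, ((β j).factorial : ℝ)))
        - ∑ β ∈ rset d n d, D β x * (∏ j, (y j - x j) ^ β j) / (∏ j, ((β j).factorial : ℝ))|
      ≤ M * dist y x ^ γ *
          ∑ β ∈ rset d n d, (∏ j, |y j - x j| ^ β j) / (∏ j, ((β j).factorial : ℝ)) := by
  have hdist0 : (0:ℝ) ≤ M * dist y x ^ γ := by positivity
  have main : ∀ i : ℕ, i ≤ d →
      |D 0 y - (∑ β ∈ mset d n i,
            D β (ptm x y i) * (∏ j, (y j - x j) ^ β j) / (∏ j, ((β j).factorial : ℝ)))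
          - ∑ β ∈ rset d n i, D β x * (∏ j, (y j - x j) ^ β j) / (∏ j, ((β j).factorial : ℝ))|
        ≤ M * dist y x ^ γ *
            ∑ β ∈ rset d n i, (∏ j, |y j - x j| ^ β j) / (∏ j, ((β j).factorial : ℝ)) := by
    intro i
    induction i with
    | zero =>
      intro _
      rcases Nat.eq_zero_or_pos n with rfl | hn
      · have hm : mset d 0 0 = ∅ := by
          ext β; simp [mem_mset]
        have hr : rset d 0 0 = {(0 : Fin d → ℕ)} := by
          ext β
          rw [mem_rset, Finset.mem_singleton]
          constructor
          · intro h
            funext j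
            exact h.2 j (Nat.zero_le _)
          · rintro rfl
            simp
        rw [hm, hr]
        simp only [Finset.sum_empty, Finset.sum_singleton, Pi.zero_apply, pow_zero,
          Finset.prod_const_one, Nat.factorial_zero, Nat.cast_one, mul_one, div_one, sub_zero,
          zero_sub, abs_neg]
        exact hhold 0 (by simp) y hy x hx
      · have hm : mset d n 0 = {(0 : Fin d → ℕ)} := by
          ext β
          rw [mem_mset, Finset.mem_singleton]
          constructor
          · intro h
            funext j
            exact h.2 j (Nat.zero_le _)
          · rintro rfl
            simpa using hn
        have hr : rset d n 0 = ∅ := by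
          ext β
          rw [mem_rset]
          simp only [Finset.notMem_empty, iff_false, not_and]
          intro h1 h2
          rw [Finset.sum_eq_zero (fun j _ => h2 j (Nat.zero_le _))] at h1
          omega
        rw [hm, hr, ptm_zero]
        simp
    | succ i ih =>
      intro hi1
      have hid : i < d := hi1
      have IH := ih (Nat.le_of_succ_le hi1)
      set I : Fin d := ⟨i, hid⟩ with hI
      have hxI : x I ∈ Icc (0:ℝ) 1 := ⟨hx.1 I, hx.2 I⟩
      have hyI : y I ∈ Icc (0:ℝ) 1 := ⟨hy.1 I, hy.2 I⟩
      have hsub : Set.uIcc (x I) (y I) ⊆ Icc (0:ℝ) 1 := Set.uIcc_subset_Icc hxI hyI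
      -- per-β Taylor expansion in coordinate I
      have exp : ∀ β : Fin d → ℕ, ∃ ξp : Fin d → ℝ, β ∈ mset d n i →
          ξp ∈ Icc (0 : Fin d → ℝ) 1 ∧ dist ξp x ≤ dist y x ∧
          D β (ptm x y i) * (∏ j, (y j - x j) ^ β j) / (∏ j, ((β j).factorial : ℝ))
            = (∑ k ∈ Finset.range (n - ∑ j, β j),
                D (Function.update β I k) (ptm x y (i+1))
                  * (∏ j, (y j - x j) ^ (Function.update β I k j))
                  / (∏ j, ((Function.update β I k j).factorial : ℝ)))
              + D (Function.update β I (n - ∑ j, β j)) ξp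
                  * (∏ j, (y j - x j) ^ (Function.update β I (n - ∑ j, β j) j))
                  / (∏ j, ((Function.update β I (n - ∑ j, β j) j).factorial : ℝ)) := by
        intro β
        by_cases hβ : β ∈ mset d n i
        case neg => exact ⟨x, fun h => absurd h hβ⟩
        obtain ⟨hs, hsupp⟩ := mem_mset.mp hβ
        have hβI : β I = 0 := hsupp I (le_refl i)
        have hf : ∀ k < n - ∑ j, β j, ∀ t ∈ Set.uIcc (x I) (y I),
            HasDerivWithinAt
              (fun t => D (Function.update β I k) (Function.update (ptm x y (i+1)) I t))
              (D (Function.update β I (k+1)) (Function.update (ptm x y (i+1)) I t))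
              (Set.uIcc (x I) (y I)) t := by
          intro k hk t ht
          have hz : Function.update (ptm x y (i+1)) I t ∈ Icc (0 : Fin d → ℝ) 1 :=
            update_mem_Icc (ptm_mem hx hy (i+1)) I (hsub ht)
          have hsum' : (∑ j, Function.update β I k j) < n := by
            rw [sum_update_zero β I hβI k]; omega
          have hd := hderiv (Function.update β I k) hsum' I _ hz
          have hfu : (fun t' => D (Function.update β I k)
                (Function.update (Function.update (ptm x y (i+1)) I t) I t'))
              = fun t' => D (Function.update β I k) (Function.update (ptm x y (i+1)) I t') := by
            funext t'
            rw [Function.update_idem]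
          have hval : Function.update (Function.update β I k) I
                (Function.update β I k I + 1) = Function.update β I (k+1) := by
            rw [Function.update_self, Function.update_idem]
          have hzI : Function.update (ptm x y (i+1)) I t I = t := by
            rw [Function.update_self]
          rw [hfu, hval, hzI] at hd
          exact hd.mono hsub
        obtain ⟨ξ, hξmem, hE⟩ := taylor1D _ (x I) (y I) (n - ∑ j, β j) hf
        refine ⟨Function.update (ptm x y (i+1)) I ξ, fun _ => ⟨?_, ?_, ?_⟩⟩
        · exact update_mem_Icc (ptm_mem hx hy (i+1)) I (hsub hξmem)
        · rw [dist_pi_le_iff dist_nonneg]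
          intro j
          by_cases hjI : j = I
          · subst hjI
            rw [Function.update_self]
            calc dist ξ (x I) = dist (x I) ξ := dist_comm _ _
              _ ≤ dist (x I) (y I) := Real.dist_left_le_of_mem_uIcc hξmem
              _ = dist (y I) (x I) := dist_comm _ _
              _ ≤ dist y x := dist_le_pi_dist y x I
          · rw [Function.update_of_ne hjI]
            simp only [ptm]
            split_ifs
            · simp only [dist_self]; exact dist_nonneg
            · exact dist_le_pi_dist y x j
        · -- the expansion identity
          have hfix0 : Function.update β I 0 = β := by
            rw [← hβI]; exact Function.update_eq_self I β
          have hpt : Function.update (ptm x y (i+1)) I (y I) = ptm x y i :=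
            ptm_update x y i hid
          have hpt2 : Function.update (ptm x y (i+1)) I (x I) = ptm x y (i+1) := by
            have hpx : x I = ptm x y (i+1) I := by
              simp only [ptm, hI]
              rw [if_pos (Nat.lt_succ_self i : ((⟨i, hid⟩ : Fin d) : ℕ) < i + 1)]
            rw [hpx]
            exact Function.update_eq_self I (ptm x y (i+1))
          rw [hfix0, hpt, hpt2] at hE
          have htermp : ∀ k : ℕ, (∏ j, (y j - x j) ^ (Function.update β I k j))
              = (y I - x I) ^ k * ∏ j, (y j - x j) ^ β j :=
            fun k => prod_update_eval (fun j e => (y j - x j) ^ e) β I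
              (by show (y I - x I) ^ β I = 1; rw [hβI, pow_zero]) k
          have htermc : ∀ k : ℕ, (∏ j, ((Function.update β I k j).factorial : ℝ))
              = (k.factorial : ℝ) * ∏ j, ((β j).factorial : ℝ) :=
            fun k => prod_update_eval (fun j e => ((e.factorial : ℕ) : ℝ)) β I
              (by show (((β I).factorial : ℕ) : ℝ) = 1; rw [hβI]; simp) k
          rw [hE]
          simp only [htermp, htermc]
          rw [add_mul, add_div, Finset.sum_mul, Finset.sum_div]
          congr 1
          · exact Finset.sum_congr rfl (fun k _ => by ring)
          · ring
      choose ξp hξp using exp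
      -- positivity facts
      have hcpos : ∀ β : Fin d → ℕ, (0:ℝ) < ∏ j, ((β j).factorial : ℝ) :=
        fun β => Finset.prod_pos (fun j _ => by
          exact_mod_cast Nat.cast_pos.mpr (Nat.factorial_pos (β j)))
      -- split the main sum
      have hMain : (∑ β ∈ mset d n i,
            D β (ptm x y i) * (∏ j, (y j - x j) ^ β j) / (∏ j, ((β j).factorial : ℝ)))
          = (∑ β ∈ mset d n i, ∑ k ∈ Finset.range (n - ∑ j, β j),
                D (Function.update β I k) (ptm x y (i+1))
                  * (∏ j, (y j - x j) ^ (Function.update β I k j))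
                  / (∏ j, ((Function.update β I k j).factorial : ℝ)))
            + ∑ β ∈ mset d n i,
                D (Function.update β I (n - ∑ j, β j)) (ξp β)
                  * (∏ j, (y j - x j) ^ (Function.update β I (n - ∑ j, β j) j))
                  / (∏ j, ((Function.update β I (n - ∑ j, β j) j).factorial : ℝ)) := by
        rw [← Finset.sum_add_distrib]
        exact Finset.sum_congr rfl (fun β hβ => (hξp β hβ).2.2)
      have hS : (∑ β ∈ mset d n i, ∑ k ∈ Finset.range (n - ∑ j, β j),
            D (Function.update β I k) (ptm x y (i+1))
              * (∏ j, (y j - x j) ^ (Function.update β I k j))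
              / (∏ j, ((Function.update β I k j).factorial : ℝ)))
          = ∑ β ∈ mset d n (i+1),
              D β (ptm x y (i+1)) * (∏ j, (y j - x j) ^ β j)
                / (∏ j, ((β j).factorial : ℝ)) :=
        sum_bij_main n i hid
          (fun β => D β (ptm x y (i+1)) * (∏ j, (y j - x j) ^ β j)
            / (∏ j, ((β j).factorial : ℝ)))
      have hB : (∑ β ∈ mset d n i,
            D (Function.update β I (n - ∑ j, β j)) x
              * (∏ j, (y j - x j) ^ (Function.update β I (n - ∑ j, β j) j))
              / (∏ j, ((Function.update β I (n - ∑ j, β j) j).factorial : ℝ)))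
          = ∑ β ∈ rset d n (i+1) \ rset d n i,
              D β x * (∏ j, (y j - x j) ^ β j) / (∏ j, ((β j).factorial : ℝ)) :=
        sum_bij_rem n i hid
          (fun β => D β x * (∏ j, (y j - x j) ^ β j) / (∏ j, ((β j).factorial : ℝ)))
      have hV : (∑ β ∈ mset d n i,
            (∏ j, |y j - x j| ^ (Function.update β I (n - ∑ j, β j) j))
              / (∏ j, ((Function.update β I (n - ∑ j, β j) j).factorial : ℝ)))
          = ∑ β ∈ rset d n (i+1) \ rset d n i,
              (∏ j, |y j - x j| ^ β j) / (∏ j, ((β j).factorial : ℝ)) :=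
        sum_bij_rem n i hid
          (fun β => (∏ j, |y j - x j| ^ β j) / (∏ j, ((β j).factorial : ℝ)))
      have hRsplit : (∑ β ∈ mset d n i,
            D (Function.update β I (n - ∑ j, β j)) (ξp β)
              * (∏ j, (y j - x j) ^ (Function.update β I (n - ∑ j, β j) j))
              / (∏ j, ((Function.update β I (n - ∑ j, β j) j).factorial : ℝ)))
          = (∑ β ∈ mset d n i,
              D (Function.update β I (n - ∑ j, β j)) x
                * (∏ j, (y j - x j) ^ (Function.update β I (n - ∑ j, β j) j))
                / (∏ j, ((Function.update β I (n - ∑ j, β j) j).factorial : ℝ)))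
            + ∑ β ∈ mset d n i,
                (D (Function.update β I (n - ∑ j, β j)) (ξp β)
                  - D (Function.update β I (n - ∑ j, β j)) x)
                  * ((∏ j, (y j - x j) ^ (Function.update β I (n - ∑ j, β j) j))
                  / (∏ j, ((Function.update β I (n - ∑ j, β j) j).factorial : ℝ))) := by
        rw [← Finset.sum_add_distrib]
        exact Finset.sum_congr rfl (fun β hβ => by ring)
      -- the error sum bound
      have hErr : |∑ β ∈ mset d n i,
            (D (Function.update β I (n - ∑ j, β j)) (ξp β)
              - D (Function.update β I (n - ∑ j, β j)) x)
              * ((∏ j, (y j - x j) ^ (Function.update β I (n - ∑ j, β j) j))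
              / (∏ j, ((Function.update β I (n - ∑ j, β j) j).factorial : ℝ)))|
          ≤ M * dist y x ^ γ *
              ∑ β ∈ rset d n (i+1) \ rset d n i,
                (∏ j, |y j - x j| ^ β j) / (∏ j, ((β j).factorial : ℝ)) := by
        rw [← hV, Finset.mul_sum]
        refine le_trans (Finset.abs_sum_le_sum_abs _ _) (Finset.sum_le_sum ?_)
        intro β hβ
        obtain ⟨hmem, hdst, _⟩ := hξp β hβ
        obtain ⟨hs, hsupp⟩ := mem_mset.mp hβ
        have hβI : β I = 0 := hsupp I (le_refl i)
        have hsn : (∑ j, Function.update β I (n - ∑ j, β j) j) = n := by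
          rw [sum_update_zero β I hβI]; omega
        have hhd := hhold (Function.update β I (n - ∑ j, β j)) hsn (ξp β) hmem x hx
        have habs : |(∏ j, (y j - x j) ^ (Function.update β I (n - ∑ j, β j) j))
              / (∏ j, ((Function.update β I (n - ∑ j, β j) j).factorial : ℝ))|
            = (∏ j, |y j - x j| ^ (Function.update β I (n - ∑ j, β j) j))
              / (∏ j, ((Function.update β I (n - ∑ j, β j) j).factorial : ℝ)) := by
          rw [abs_div, Finset.abs_prod, abs_of_pos (hcpos _)]
          congr 1
          exact Finset.prod_congr rfl (fun j _ => abs_pow _ _)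
        rw [abs_mul, habs]
        refine mul_le_mul ?_ le_rfl (by positivity) (by positivity)
        calc |D (Function.update β I (n - ∑ j, β j)) (ξp β)
              - D (Function.update β I (n - ∑ j, β j)) x|
            ≤ M * dist (ξp β) x ^ γ := hhd
          _ ≤ M * dist y x ^ γ := by
              apply mul_le_mul_of_nonneg_left _ hM.le
              exact Real.rpow_le_rpow dist_nonneg hdst hγ.le
      -- combine
      have hsd := Finset.sum_sdiff (rset_subset d n i)
        (f := fun β => D β x * (∏ j, (y j - x j) ^ β j) / (∏ j, ((β j).factorial : ℝ)))
      have hsd2 := Finset.sum_sdiff (rset_subset d n i)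
        (f := fun β => (∏ j, |y j - x j| ^ β j) / (∏ j, ((β j).factorial : ℝ)))
      have hkey : D 0 y
            - (∑ β ∈ mset d n (i+1),
                D β (ptm x y (i+1)) * (∏ j, (y j - x j) ^ β j)
                  / (∏ j, ((β j).factorial : ℝ)))
            - (∑ β ∈ rset d n (i+1),
                D β x * (∏ j, (y j - x j) ^ β j) / (∏ j, ((β j).factorial : ℝ)))
          = (D 0 y
              - (∑ β ∈ mset d n i,
                  D β (ptm x y i) * (∏ j, (y j - x j) ^ β j)
                    / (∏ j, ((β j).factorial : ℝ)))
              - ∑ β ∈ rset d n i,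
                  D β x * (∏ j, (y j - x j) ^ β j) / (∏ j, ((β j).factorial : ℝ)))
            + ∑ β ∈ mset d n i,
                (D (Function.update β I (n - ∑ j, β j)) (ξp β)
                  - D (Function.update β I (n - ∑ j, β j)) x)
                  * ((∏ j, (y j - x j) ^ (Function.update β I (n - ∑ j, β j) j))
                  / (∏ j, ((Function.update β I (n - ∑ j, β j) j).factorial : ℝ))) := by
        rw [← hS, ← hsd, ← hB, hMain, hRsplit]
        ring
      rw [hkey, ← hsd2]
      calc |(D 0 y
              - (∑ β ∈ mset d n i,
                  D β (ptm x y i) * (∏ j, (y j - x j) ^ β j)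
                    / (∏ j, ((β j).factorial : ℝ)))
              - ∑ β ∈ rset d n i,
                  D β x * (∏ j, (y j - x j) ^ β j) / (∏ j, ((β j).factorial : ℝ)))
            + ∑ β ∈ mset d n i,
                (D (Function.update β I (n - ∑ j, β j)) (ξp β)
                  - D (Function.update β I (n - ∑ j, β j)) x)
                  * ((∏ j, (y j - x j) ^ (Function.update β I (n - ∑ j, β j) j))
                  / (∏ j, ((Function.update β I (n - ∑ j, β j) j).factorial : ℝ)))|
          ≤ |D 0 y
              - (∑ β ∈ mset d n i,
                  D β (ptm x y i) * (∏ j, (y j - x j) ^ β j)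
                    / (∏ j, ((β j).factorial : ℝ)))
              - ∑ β ∈ rset d n i,
                  D β x * (∏ j, (y j - x j) ^ β j) / (∏ j, ((β j).factorial : ℝ))|
            + |∑ β ∈ mset d n i,
                (D (Function.update β I (n - ∑ j, β j)) (ξp β)
                  - D (Function.update β I (n - ∑ j, β j)) x)
                  * ((∏ j, (y j - x j) ^ (Function.update β I (n - ∑ j, β j) j))
                  / (∏ j, ((Function.update β I (n - ∑ j, β j) j).factorial : ℝ)))| :=
            abs_add_le _ _
        _ ≤ M * dist y x ^ γ *
              (∑ β ∈ rset d n i, (∏ j, |y j - x j| ^ β j) / (∏ j, ((β j).factorial : ℝ)))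
            + M * dist y x ^ γ *
              (∑ β ∈ rset d n (i+1) \ rset d n i,
                (∏ j, |y j - x j| ^ β j) / (∏ j, ((β j).factorial : ℝ))) :=
            add_le_add IH hErr
        _ = M * dist y x ^ γ *
              ((∑ β ∈ rset d n (i+1) \ rset d n i,
                (∏ j, |y j - x j| ^ β j) / (∏ j, ((β j).factorial : ℝ)))
              + ∑ β ∈ rset d n i,
                (∏ j, |y j - x j| ^ β j) / (∏ j, ((β j).factorial : ℝ))) := by ring
  have H := main d le_rfl
  rwa [ptm_ge x y le_rfl] at H

/-- Uniform approximation of `∂^s Z` by a linear estimator, for a path `Z` with partial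
derivatives up to order `|s|` (encoded by the family `D`, `D 0 = Z`), all derivatives of
order `≤ |s|` bounded by `M`, and those of order `|s|` Hölder continuous of exponent
`γ ∈ (0,1]` with constant `M` in sup-norm. The weights satisfy the moment conditions up
to order `|s|`, localize at bandwidth `h` and have absolute sums `≤ C₃ h^{-|s|}`. Then
`sup_x |∑_j w_j(x) Z(x_j) - ∂^s Z(x)| ≤ M h^γ C₃ ∑_{|k|=|s|} 1/k!`. -/
theorem linear_estimator_smooth_path_bound
    {d : ℕ} {ι : Type*} [Fintype ι]
    (γ M C3 h : ℝ) (hγ : 0 < γ) (hγ1 : γ ≤ 1) (hM : 0 < M) (hC3 : 0 < C3)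
    (hh : 0 < h) (hh1 : h ≤ 1)
    (s : Fin d → ℕ)
    (D : (Fin d → ℕ) → (Fin d → ℝ) → ℝ)
    (hderiv : ∀ β : Fin d → ℕ, (∑ i, β i) < (∑ i, s i) → ∀ i : Fin d,
      ∀ x ∈ Icc (0 : Fin d → ℝ) 1,
        HasDerivWithinAt (fun t : ℝ => D β (Function.update x i t))
          (D (Function.update β i (β i + 1)) x) (Icc (0:ℝ) 1) (x i))
    (hbound : ∀ β : Fin d → ℕ, (∑ i, β i) ≤ (∑ i, s i) →
      ∀ x ∈ Icc (0 : Fin d → ℝ) 1, |D β x| ≤ M)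
    (hhold : ∀ β : Fin d → ℕ, (∑ i, β i) = (∑ i, s i) →
      ∀ x ∈ Icc (0 : Fin d → ℝ) 1, ∀ y ∈ Icc (0 : Fin d → ℝ) 1,
        |D β x - D β y| ≤ M * dist x y ^ γ)
    (xj : ι → (Fin d → ℝ)) (hxj : ∀ j, xj j ∈ Icc (0 : Fin d → ℝ) 1)
    (w : (Fin d → ℝ) → ι → ℝ)
    (hrep : ∀ x ∈ Icc (0 : Fin d → ℝ) 1, ∀ r : Fin d → ℕ, (∑ i, r i) ≤ (∑ i, s i) →
      ∑ j, (∏ i, (xj j i - x i) ^ r i) * w x j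
        = if r = s then (∏ i, (Nat.factorial (s i) : ℝ)) else 0)
    (hloc : ∀ x ∈ Icc (0 : Fin d → ℝ) 1, ∀ j, h < dist x (xj j) → w x j = 0)
    (hsum : ∀ x ∈ Icc (0 : Fin d → ℝ) 1, ∑ j, |w x j| ≤ C3 / h ^ (∑ i, s i)) :
    ∀ x ∈ Icc (0 : Fin d → ℝ) 1,
      |(∑ j, w x j * D 0 (xj j)) - D s x| ≤
        M * h ^ γ * C3 *
          ∑ k ∈ Finset.Nat.antidiagonalTuple d (∑ i, s i),
            (1 / ∏ i, (Nat.factorial (k i) : ℝ)) := by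

  intro x hx
  set n : ℕ := ∑ i, s i with hn
  rw [← rset_top d n]
  have hcpos : ∀ β : Fin d → ℕ, (0:ℝ) < ∏ i, ((β i).factorial : ℝ) :=
    fun β => Finset.prod_pos (fun i _ => Nat.cast_pos.mpr (Nat.factorial_pos (β i)))
  -- Step 1: reproduction of the Taylor polynomial by the weights
  have hmset0 : ∀ β ∈ mset d n d, (∑ j, (∏ i, (xj j i - x i) ^ β i) * w x j) = 0 := by
    intro β hβ
    obtain ⟨hlt, -⟩ := mem_mset.mp hβ
    rw [hrep x hx β hlt.le, if_neg]
    rintro rfl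
    exact absurd hlt (lt_irrefl _)
  have hTsum : (∑ j, w x j *
        ((∑ β ∈ mset d n d,
            D β x * (∏ i, (xj j i - x i) ^ β i) / (∏ i, ((β i).factorial : ℝ)))
          + ∑ β ∈ rset d n d,
            D β x * (∏ i, (xj j i - x i) ^ β i) / (∏ i, ((β i).factorial : ℝ))))
      = D s x := by
    simp only [mul_add, Finset.mul_sum]
    rw [Finset.sum_add_distrib, Finset.sum_comm, Finset.sum_comm (s := Finset.univ)]
    have h1 : ∀ β ∈ mset d n d,
        (∑ j, w x j * (D β x * (∏ i, (xj j i - x i) ^ β i) / (∏ i, ((β i).factorial : ℝ))))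
          = 0 := by
      intro β hβ
      have : (∑ j, w x j * (D β x * (∏ i, (xj j i - x i) ^ β i)
            / (∏ i, ((β i).factorial : ℝ))))
          = (D β x / (∏ i, ((β i).factorial : ℝ)))
            * ∑ j, (∏ i, (xj j i - x i) ^ β i) * w x j := by
        rw [Finset.mul_sum]
        exact Finset.sum_congr rfl (fun j _ => by ring)
      rw [this, hmset0 β hβ, mul_zero]
    rw [Finset.sum_eq_zero h1, zero_add]
    have h2 : ∀ β ∈ rset d n d,
        (∑ j, w x j * (D β x * (∏ i, (xj j i - x i) ^ β i) / (∏ i, ((β i).factorial : ℝ))))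
          = if β = s then D s x else 0 := by
      intro β hβ
      obtain ⟨heq, -⟩ := mem_rset.mp hβ
      have : (∑ j, w x j * (D β x * (∏ i, (xj j i - x i) ^ β i)
            / (∏ i, ((β i).factorial : ℝ))))
          = (D β x / (∏ i, ((β i).factorial : ℝ)))
            * ∑ j, (∏ i, (xj j i - x i) ^ β i) * w x j := by
        rw [Finset.mul_sum]
        exact Finset.sum_congr rfl (fun j _ => by ring)
      rw [this, hrep x hx β heq.le]
      split_ifs with hbs
      · subst hbs
        rw [div_mul_cancel₀]
        exact ne_of_gt (hcpos β)
      · rw [mul_zero]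
    rw [Finset.sum_congr rfl h2, Finset.sum_ite_eq' (rset d n d) s (fun _ => D s x),
      if_pos (mem_rset.mpr ⟨rfl, fun j hj => absurd j.isLt (by omega)⟩)]
  -- Step 2: rewrite the estimation error using the Taylor remainder
  have hrw : (∑ j, w x j * D 0 (xj j)) - D s x
      = ∑ j, w x j * (D 0 (xj j)
          - ((∑ β ∈ mset d n d,
              D β x * (∏ i, (xj j i - x i) ^ β i) / (∏ i, ((β i).factorial : ℝ)))
            + ∑ β ∈ rset d n d,
              D β x * (∏ i, (xj j i - x i) ^ β i) / (∏ i, ((β i).factorial : ℝ)))) := by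
    rw [← hTsum, ← Finset.sum_sub_distrib]
    exact Finset.sum_congr rfl (fun j _ => by ring)
  rw [hrw]
  -- Step 3: bound each term
  set K : ℝ := M * h ^ γ * (h ^ n * ∑ β ∈ rset d n d, 1 / (∏ i, ((β i).factorial : ℝ)))
    with hK
  have hsumpos : (0:ℝ) ≤ ∑ β ∈ rset d n d, 1 / (∏ i, ((β i).factorial : ℝ)) :=
    Finset.sum_nonneg (fun β _ => by positivity)
  have hKpos : 0 ≤ K := by
    rw [hK]
    have : (0:ℝ) ≤ h ^ γ := Real.rpow_nonneg hh.le γ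
    positivity
  have hperj : ∀ j : ι, |w x j * (D 0 (xj j)
        - ((∑ β ∈ mset d n d,
            D β x * (∏ i, (xj j i - x i) ^ β i) / (∏ i, ((β i).factorial : ℝ)))
          + ∑ β ∈ rset d n d,
            D β x * (∏ i, (xj j i - x i) ^ β i) / (∏ i, ((β i).factorial : ℝ))))|
      ≤ |w x j| * K := by
    intro j
    by_cases hj : h < dist x (xj j)
    · rw [hloc x hx j hj]
      simp only [zero_mul, abs_zero]
      positivity
    · push_neg at hj
      rw [abs_mul]
      apply mul_le_mul_of_nonneg_left _ (abs_nonneg _)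
      rw [sub_add_eq_sub_sub]
      have h1 := key_taylor n γ M hγ hM D hderiv
        (fun β hβ p hp q hq => hhold β hβ p hp q hq) x (xj j) hx (hxj j)
      refine le_trans h1 ?_
      rw [hK]
      have hd1 : dist (xj j) x ≤ h := by rw [dist_comm]; exact hj
      have hf1 : M * dist (xj j) x ^ γ ≤ M * h ^ γ :=
        mul_le_mul_of_nonneg_left (Real.rpow_le_rpow dist_nonneg hd1 hγ.le) hM.le
      have hf2 : (∑ β ∈ rset d n d,
            (∏ i, |xj j i - x i| ^ β i) / (∏ i, ((β i).factorial : ℝ)))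
          ≤ h ^ n * ∑ β ∈ rset d n d, 1 / (∏ i, ((β i).factorial : ℝ)) := by
        rw [Finset.mul_sum]
        refine Finset.sum_le_sum (fun β hβ => ?_)
        obtain ⟨heq, -⟩ := mem_rset.mp hβ
        have hprod : (∏ i, |xj j i - x i| ^ β i) ≤ h ^ n := by
          have : (∏ i, |xj j i - x i| ^ β i) ≤ ∏ i, h ^ β i := by
            refine Finset.prod_le_prod (fun i _ => by positivity) (fun i _ => ?_)
            refine pow_le_pow_left₀ (abs_nonneg _) ?_ (β i)
            calc |xj j i - x i| = dist (xj j i) (x i) := (Real.dist_eq _ _).symm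
              _ ≤ dist (xj j) x := dist_le_pi_dist _ _ i
              _ ≤ h := hd1
          rw [Finset.prod_pow_eq_pow_sum] at this
          rwa [heq] at this
        calc (∏ i, |xj j i - x i| ^ β i) / (∏ i, ((β i).factorial : ℝ))
            = (∏ i, |xj j i - x i| ^ β i) * (1 / (∏ i, ((β i).factorial : ℝ))) := by ring
          _ ≤ h ^ n * (1 / (∏ i, ((β i).factorial : ℝ))) :=
              mul_le_mul_of_nonneg_right hprod (by positivity)
      refine mul_le_mul hf1 hf2 ?_ ?_
      · exact Finset.sum_nonneg (fun β _ => by positivity)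
      · positivity
  calc |∑ j, w x j * (D 0 (xj j)
        - ((∑ β ∈ mset d n d,
            D β x * (∏ i, (xj j i - x i) ^ β i) / (∏ i, ((β i).factorial : ℝ)))
          + ∑ β ∈ rset d n d,
            D β x * (∏ i, (xj j i - x i) ^ β i) / (∏ i, ((β i).factorial : ℝ))))|
      ≤ ∑ j, |w x j * (D 0 (xj j)
        - ((∑ β ∈ mset d n d,
            D β x * (∏ i, (xj j i - x i) ^ β i) / (∏ i, ((β i).factorial : ℝ)))
          + ∑ β ∈ rset d n d,
            D β x * (∏ i, (xj j i - x i) ^ β i) / (∏ i, ((β i).factorial : ℝ))))| :=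
        Finset.abs_sum_le_sum_abs _ _
    _ ≤ ∑ j, |w x j| * K := Finset.sum_le_sum (fun j _ => hperj j)
    _ = (∑ j, |w x j|) * K := (Finset.sum_mul _ _ _).symm
    _ ≤ (C3 / h ^ n) * K := mul_le_mul_of_nonneg_right (hsum x hx) hKpos
    _ = M * h ^ γ * C3 * ∑ β ∈ rset d n d, 1 / (∏ i, ((β i).factorial : ℝ)) := by
        rw [hK]
        field_simp
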